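/- Let T₁ and T₂ be finite trees in which every non-leaf vertex has degree at least 3, equipped with bijections from a common finite label set L (with |L| ≥ 3) onto their respective sets of leaves. Suppose that for all pairwise distinct labels a, b, c, d ∈ L, the unique path in T₁ between the leaves labeled a and b is edge-disjoint from the unique path in T₁ between the leaves labeled c and d if and only if the corresponding paths in T₂ are edge-disjoint. Then there exists a graph isomorphism from T₁ to T₂ carrying the leaf labeled x in T₁ to the leaf labeled x in T₂ for every x ∈ L. -/

import Mathlib

open SimpleGraph Walk

namespace TreeRecon

set_option linter.unusedSectionVars false

variable {V : Type} [DecidableEq V] {G : SimpleGraph V}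

noncomputable def tp (hG : G.IsTree) (x y : V) : G.Walk x y :=
  (hG.existsUnique_path x y).choose

lemma tp_isPath (hG : G.IsTree) (x y : V) : (tp hG x y).IsPath :=
  (hG.existsUnique_path x y).choose_spec.1

lemma tp_eq (hG : G.IsTree) {x y : V} {p : G.Walk x y} (hp : p.IsPath) :
    p = tp hG x y :=
  (hG.existsUnique_path x y).choose_spec.2 p hp

lemma tp_self (hG : G.IsTree) (x : V) : tp hG x x = Walk.nil :=
  (tp_eq hG (Walk.IsPath.nil)).symm

lemma tp_rev (hG : G.IsTree) (x y : V) : tp hG y x = (tp hG x y).reverse :=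
  (tp_eq hG (tp_isPath hG x y).reverse).symm

lemma mem_sup_symm (hG : G.IsTree) {x y u : V} (h : u ∈ (tp hG x y).support) :
    u ∈ (tp hG y x).support := by
  rw [tp_rev, support_reverse, List.mem_reverse]; exact h

lemma start_mem (hG : G.IsTree) (x y : V) : x ∈ (tp hG x y).support := start_mem_support _

lemma end_mem (hG : G.IsTree) (x y : V) : y ∈ (tp hG x y).support := end_mem_support _

/-- Support of the tree path is contained in the support of every walk. -/
lemma tp_support_subset (hG : G.IsTree) {x y : V} (w : G.Walk x y) :
    (tp hG x y).support ⊆ w.support := by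
  rw [← tp_eq hG w.bypass_isPath]; exact w.support_bypass_subset

lemma tp_edges_subset (hG : G.IsTree) {x y : V} (w : G.Walk x y) :
    (tp hG x y).edges ⊆ w.edges := by
  rw [← tp_eq hG w.bypass_isPath]; exact w.edges_bypass_subset

/-- Splitting the tree path at a vertex on it. -/
lemma tp_split (hG : G.IsTree) {x y u : V} (h : u ∈ (tp hG x y).support) :
    tp hG x y = (tp hG x u).append (tp hG u y) := by
  conv_lhs => rw [← (tp hG x y).take_spec h]
  rw [← tp_eq hG ((tp_isPath hG x y).takeUntil h),
    ← tp_eq hG ((tp_isPath hG x y).dropUntil h)]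

lemma sup_left_subset (hG : G.IsTree) {x y u : V} (h : u ∈ (tp hG x y).support) :
    (tp hG x u).support ⊆ (tp hG x y).support := by
  rw [tp_split hG h]; intro z hz
  rw [mem_support_append_iff]; exact Or.inl hz

lemma sup_right_subset (hG : G.IsTree) {x y u : V} (h : u ∈ (tp hG x y).support) :
    (tp hG u y).support ⊆ (tp hG x y).support := by
  rw [tp_split hG h]; intro z hz
  rw [mem_support_append_iff]; exact Or.inr hz

lemma edges_left_subset (hG : G.IsTree) {x y u : V} (h : u ∈ (tp hG x y).support) :
    (tp hG x u).edges ⊆ (tp hG x y).edges := by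
  rw [tp_split hG h, edges_append]; intro e he; exact List.mem_append_left _ he

lemma edges_right_subset (hG : G.IsTree) {x y u : V} (h : u ∈ (tp hG x y).support) :
    (tp hG u y).edges ⊆ (tp hG x y).edges := by
  rw [tp_split hG h, edges_append]; intro e he; exact List.mem_append_right _ he

/-- The two halves of a path meet only in the splitting vertex. -/
lemma sup_split_unique (hG : G.IsTree) {x y u z : V} (h : u ∈ (tp hG x y).support)
    (h1 : z ∈ (tp hG x u).support) (h2 : z ∈ (tp hG u y).support) : z = u := by
  by_contra hne
  have hnd := (tp_isPath hG x y).support_nodup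
  rw [tp_split hG h, support_append] at hnd
  have h2' : z ∈ (tp hG u y).support.tail := by
    have hc := (tp hG u y).support_eq_cons
    rw [hc, List.mem_cons] at h2
    exact h2.resolve_left hne
  exact (List.disjoint_of_nodup_append hnd) h1 h2'

lemma edges_split_disjoint (hG : G.IsTree) {x y u : V} (h : u ∈ (tp hG x y).support)
    {e : Sym2 V} (h1 : e ∈ (tp hG x u).edges) (h2 : e ∈ (tp hG u y).edges) : False := by
  have hnd := (tp_isPath hG x y).edges_nodup
  rw [tp_split hG h, edges_append] at hnd
  exact (List.disjoint_of_nodup_append hnd) h1 h2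

/-- If `v, w` both lie on the path from `x` to `y`, so does everything between them. -/
lemma sup_mem_mem (hG : G.IsTree) {x y v w : V} (hv : v ∈ (tp hG x y).support)
    (hw : w ∈ (tp hG x y).support) :
    (∀ z ∈ (tp hG v w).support, z ∈ (tp hG x y).support) ∧
    (∀ e ∈ (tp hG v w).edges, e ∈ (tp hG x y).edges) := by
  rw [tp_split hG hv, mem_support_append_iff] at hw
  rcases hw with hw | hw
  · constructor
    · intro z hz
      have hz' : z ∈ (tp hG w v).support := mem_sup_symm hG hz
      have : z ∈ (tp hG x v).support := by
        have hwv : w ∈ (tp hG x v).support := hw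
        have := sup_right_subset hG hwv
        exact this hz'
      exact sup_left_subset hG hv this
    · intro e he
      have he' : e ∈ (tp hG w v).edges := by
        rw [tp_rev hG w v, edges_reverse, List.mem_reverse] at he
        exact he
      have : e ∈ (tp hG x v).edges := edges_right_subset hG hw he'
      exact edges_left_subset hG hv this
  · constructor
    · intro z hz
      exact sup_right_subset hG hv (sup_left_subset hG hw hz)
    · intro e he
      exact edges_right_subset hG hv (edges_left_subset hG hw he)

lemma mem_edges_symm (hG : G.IsTree) {x y : V} {e : Sym2 V} (h : e ∈ (tp hG x y).edges) :
    e ∈ (tp hG y x).edges := by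
  rw [tp_rev hG x y, edges_reverse, List.mem_reverse]
  exact h

/-- Appending two paths which meet only at the junction vertex gives a path. -/
lemma isPath_append (hG : G.IsTree) {x y z : V} {p : G.Walk x y} {q : G.Walk y z}
    (hp : p.IsPath) (hq : q.IsPath)
    (h : ∀ w, w ∈ p.support → w ∈ q.support → w = y) : (p.append q).IsPath := by
  rw [isPath_def, support_append]
  apply List.Nodup.append hp.support_nodup (hq.support_nodup.sublist (List.tail_sublist _))
  intro w hw hw'
  have hwq : w ∈ q.support := List.mem_of_mem_tail hw'
  have : w = y := h w hw hwq
  subst this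
  have := hq.support_nodup
  rw [q.support_eq_cons] at this
  exact (List.nodup_cons.mp this).1 hw'

/-- There is a "gate" from `x` to the path from `y` to `z`. -/
lemma exists_gate [Fintype V] (hG : G.IsTree) (x y z : V) :
    ∃ m, m ∈ (tp hG y z).support ∧
      ∀ w, w ∈ (tp hG x m).support → w ∈ (tp hG y z).support → w = m := by
  classical
  obtain ⟨m, hm, hmin⟩ := Finset.exists_min_image ((tp hG y z).support.toFinset)
    (fun m => (tp hG x m).length) ⟨y, by simp [start_mem]⟩
  rw [List.mem_toFinset] at hm
  refine ⟨m, hm, fun w hw hwyz => ?_⟩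
  have hsplit := tp_split hG hw
  have hlen : (tp hG x w).length + (tp hG w m).length = (tp hG x m).length := by
    rw [hsplit, length_append]
  have hle := hmin w (by rwa [List.mem_toFinset])
  have : (tp hG w m).length = 0 := by omega
  exact (Walk.eq_of_length_eq_zero this)

/-- Existence of the median of three vertices. -/
lemma exists_med [Fintype V] (hG : G.IsTree) (x y z : V) :
    ∃ m, m ∈ (tp hG x y).support ∧ m ∈ (tp hG x z).support ∧ m ∈ (tp hG y z).support := by
  obtain ⟨m, hm, hgate⟩ := exists_gate hG x y z
  have hxy : m ∈ (tp hG x y).support := by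
    have hpath : ((tp hG x m).append (tp hG m y)).IsPath := by
      refine isPath_append hG (tp_isPath _ _ _) (tp_isPath _ _ _) fun w hw hw' => ?_
      exact hgate w hw (sup_left_subset hG hm (mem_sup_symm hG hw'))
    rw [← tp_eq hG hpath, mem_support_append_iff]
    exact Or.inl (end_mem_support _)
  have hxz : m ∈ (tp hG x z).support := by
    have hpath : ((tp hG x m).append (tp hG m z)).IsPath := by
      refine isPath_append hG (tp_isPath _ _ _) (tp_isPath _ _ _) fun w hw hw' => ?_
      exact hgate w hw (sup_right_subset hG hm hw')
    rw [← tp_eq hG hpath, mem_support_append_iff]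
    exact Or.inl (end_mem_support _)
  exact ⟨m, hxy, hxz, hm⟩

lemma med_unique (hG : G.IsTree) {x y z m m' : V}
    (h1 : m ∈ (tp hG x y).support) (h2 : m ∈ (tp hG x z).support)
    (h3 : m ∈ (tp hG y z).support)
    (h1' : m' ∈ (tp hG x y).support) (h2' : m' ∈ (tp hG x z).support)
    (h3' : m' ∈ (tp hG y z).support) : m' = m := by
  have A : m' ∈ (tp hG x m).support ∨ m' ∈ (tp hG m y).support := by
    rw [tp_split hG h1, mem_support_append_iff] at h1'; exact h1'
  have B : m' ∈ (tp hG x m).support ∨ m' ∈ (tp hG m z).support := by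
    rw [tp_split hG h2, mem_support_append_iff] at h2'; exact h2'
  have C : m' ∈ (tp hG y m).support ∨ m' ∈ (tp hG m z).support := by
    rw [tp_split hG h3, mem_support_append_iff] at h3'; exact h3'
  rcases A with A | A
  · rcases C with C | C
    · exact sup_split_unique hG h1 A (mem_sup_symm hG C)
    · exact sup_split_unique hG h2 A C
  · rcases B with B | B
    · exact sup_split_unique hG h1 B A
    · exact sup_split_unique hG h3 (mem_sup_symm hG A) B

lemma disj_iff_tp (hG : G.IsTree) (a b c d : V) :
    (∀ (P : G.Walk a b) (Q : G.Walk c d), P.IsPath → Q.IsPath →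
      ∀ e ∈ P.edges, e ∉ Q.edges) ↔
    (∀ e ∈ (tp hG a b).edges, e ∉ (tp hG c d).edges) := by
  constructor
  · intro h
    exact h _ _ (tp_isPath hG a b) (tp_isPath hG c d)
  · intro h P Q hP hQ
    rw [tp_eq hG hP, tp_eq hG hQ]
    exact h

variable [Fintype V]

noncomputable def med (hG : G.IsTree) (x y z : V) : V := (exists_med hG x y z).choose

lemma med_mem₁ (hG : G.IsTree) (x y z : V) : med hG x y z ∈ (tp hG x y).support :=
  (exists_med hG x y z).choose_spec.1

lemma med_mem₂ (hG : G.IsTree) (x y z : V) : med hG x y z ∈ (tp hG x z).support :=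
  (exists_med hG x y z).choose_spec.2.1

lemma med_mem₃ (hG : G.IsTree) (x y z : V) : med hG x y z ∈ (tp hG y z).support :=
  (exists_med hG x y z).choose_spec.2.2

/-- Characterization of the median. -/
lemma med_char (hG : G.IsTree) {x y z m : V}
    (h1 : m ∈ (tp hG x y).support) (h2 : m ∈ (tp hG x z).support)
    (h3 : m ∈ (tp hG y z).support) : m = med hG x y z :=
  med_unique hG (med_mem₁ hG x y z) (med_mem₂ hG x y z) (med_mem₃ hG x y z) h1 h2 h3

lemma med_comm₁₂ (hG : G.IsTree) (x y z : V) : med hG x y z = med hG y x z :=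
  (med_char hG (mem_sup_symm hG (med_mem₁ hG y x z)) (med_mem₃ hG y x z)
    (med_mem₂ hG y x z)).symm

lemma med_comm₂₃ (hG : G.IsTree) (x y z : V) : med hG x y z = med hG x z y :=
  (med_char hG (med_mem₂ hG x z y) (med_mem₁ hG x z y)
    (mem_sup_symm hG (med_mem₃ hG x z y))).symm

lemma med_rot (hG : G.IsTree) (x y z : V) : med hG x y z = med hG y z x := by
  rw [med_comm₁₂, med_comm₂₃]

/-- The gate property: the path from `c` to `med a b c` meets the path from `a` to `b`
only in the median. -/
lemma med_gate (hG : G.IsTree) {a b c m w : V} (hm : m = med hG a b c)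
    (h1 : w ∈ (tp hG c m).support) (h2 : w ∈ (tp hG a b).support) :
    w = m := by
  subst hm
  have hca : med hG a b c ∈ (tp hG c a).support := mem_sup_symm hG (med_mem₂ hG a b c)
  have hcb : med hG a b c ∈ (tp hG c b).support := mem_sup_symm hG (med_mem₃ hG a b c)
  have hwa : w ∈ (tp hG c a).support := sup_left_subset hG hca h1
  have hwb : w ∈ (tp hG c b).support := sup_left_subset hG hcb h1
  exact med_char hG h2 (mem_sup_symm hG hwa) (mem_sup_symm hG hwb)

/-- Projection: points on the path from `c` to `med a b c` all have median `med a b c`. -/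
lemma med_proj (hG : G.IsTree) {a b c z : V}
    (hz : z ∈ (tp hG c (med hG a b c)).support) : med hG a b z = med hG a b c := by
  have key : ∀ a' b' : V, med hG a b c = med hG a' b' c →
      med hG a b c ∈ (tp hG z a').support := by
    intro a' b' hmed
    have h1 : med hG a b c ∈ (tp hG a' b').support := by
      rw [hmed]; exact med_mem₁ hG a' b' c
    have hpath : ((tp hG z (med hG a b c)).append (tp hG (med hG a b c) a')).IsPath := by
      refine isPath_append hG (tp_isPath _ _ _) (tp_isPath _ _ _) fun w hw hw' => ?_
      have hwc : w ∈ (tp hG c (med hG a b c)).support :=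
        (sup_mem_mem hG hz (end_mem hG c _)).1 w hw
      have hwab : w ∈ (tp hG a' b').support :=
        sup_left_subset hG h1 (mem_sup_symm hG hw')
      exact med_gate hG hmed hwc hwab
    rw [← tp_eq hG hpath, mem_support_append_iff]
    exact Or.inl (end_mem_support _)
  have hza := key a b rfl
  have hzb := key b a (med_comm₁₂ hG a b c)
  exact (med_char hG (med_mem₁ hG a b c) (mem_sup_symm hG hza) (mem_sup_symm hG hzb)).symm

/-- Key lemma: the medians of `c` and `d` onto the path from `a` to `b` coincide iff the
paths `a–b` and `c–d` are edge-disjoint. -/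
lemma med_eq_iff_disjoint (hG : G.IsTree) (a b c d : V) :
    med hG a b c = med hG a b d ↔
      ∀ e ∈ (tp hG a b).edges, e ∉ (tp hG c d).edges := by
  constructor
  · intro hm e
    induction e with
    | _ u v =>
      intro heab hecd
      have hu : u ∈ (tp hG a b).support := (tp hG a b).fst_mem_support_of_mem_edges heab
      have hv : v ∈ (tp hG a b).support := (tp hG a b).snd_mem_support_of_mem_edges heab
      have hne : u ≠ v := ((tp hG a b).edges_subset_edgeSet heab).ne
      have hsub := tp_edges_subset hG
        ((tp hG c (med hG a b c)).append (tp hG (med hG a b c) d))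
      have h2 := hsub hecd
      rw [edges_append, List.mem_append] at h2
      rcases h2 with h2 | h2
      · have hu' := (tp hG c _).fst_mem_support_of_mem_edges h2
        have hv' := (tp hG c _).snd_mem_support_of_mem_edges h2
        exact hne ((med_gate hG rfl hu' hu).trans (med_gate hG rfl hv' hv).symm)
      · have hu' := (tp hG _ d).fst_mem_support_of_mem_edges h2
        have hv' := (tp hG _ d).snd_mem_support_of_mem_edges h2
        have hu'' : u ∈ (tp hG d (med hG a b d)).support := by
          rw [← hm]; exact mem_sup_symm hG hu'
        have hv'' : v ∈ (tp hG d (med hG a b d)).support := by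
          rw [← hm]; exact mem_sup_symm hG hv'
        exact hne ((med_gate hG rfl hu'' hu).trans (med_gate hG rfl hv'' hv).symm)
  · intro hdisj
    by_contra hne
    have hmab : med hG a b c ∈ (tp hG a b).support := med_mem₁ hG a b c
    have hm'ab : med hG a b d ∈ (tp hG a b).support := med_mem₁ hG a b d
    have mm_sub := sup_mem_mem hG hmab hm'ab
    have hQ : ((tp hG (med hG a b c) (med hG a b d)).append
        (tp hG (med hG a b d) d)).IsPath := by
      refine isPath_append hG (tp_isPath _ _ _) (tp_isPath _ _ _) fun w hw hw' => ?_
      exact med_gate hG rfl (mem_sup_symm hG hw') (mm_sub.1 w hw)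
    have hW : ((tp hG c (med hG a b c)).append
        ((tp hG (med hG a b c) (med hG a b d)).append
          (tp hG (med hG a b d) d))).IsPath := by
      refine isPath_append hG (tp_isPath _ _ _) hQ fun w hw hw' => ?_
      rw [mem_support_append_iff] at hw'
      rcases hw' with hw' | hw'
      · exact med_gate hG rfl hw (mm_sub.1 w hw')
      · exfalso
        have h1 : med hG a b w = med hG a b c := med_proj hG hw
        have h2 : med hG a b w = med hG a b d :=
          med_proj hG (mem_sup_symm hG hw')
        exact hne (h1.symm.trans h2)
    have hedge : ∃ e, e ∈ (tp hG (med hG a b c) (med hG a b d)).edges := by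
      have hlen : (tp hG (med hG a b c) (med hG a b d)).length ≠ 0 := by
        intro h0
        exact hne (Walk.eq_of_length_eq_zero h0)
      have : (tp hG (med hG a b c) (med hG a b d)).edges ≠ [] := by
        intro h0
        apply hlen
        have := (tp hG (med hG a b c) (med hG a b d)).length_edges
        rw [h0] at this
        simpa using this.symm
      exact List.exists_mem_of_ne_nil _ this
    obtain ⟨e, he⟩ := hedge
    refine hdisj e (mm_sub.2 e he) ?_
    rw [← tp_eq hG hW, edges_append, edges_append]
    exact List.mem_append_right _ (List.mem_append_left _ he)

/-- The next vertex after `x` on the path towards `y`. -/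
noncomputable def nxt (hG : G.IsTree) (x y : V) : V := (tp hG x y).getVert 1

lemma tp_not_nil (hG : G.IsTree) {x y : V} (hxy : x ≠ y) : ¬ (tp hG x y).Nil := by
  rw [nil_iff_length_eq]
  exact fun h => hxy (Walk.eq_of_length_eq_zero h)

lemma nxt_adj (hG : G.IsTree) {x y : V} (hxy : x ≠ y) : G.Adj x (nxt hG x y) :=
  Walk.adj_snd (tp_not_nil hG hxy)

lemma nxt_mem (hG : G.IsTree) {x y : V} (hxy : x ≠ y) :
    nxt hG x y ∈ (tp hG x y).support := by
  rw [mem_support_iff_exists_getVert]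
  refine ⟨1, rfl, ?_⟩
  have : (tp hG x y).length ≠ 0 := fun h => hxy (Walk.eq_of_length_eq_zero h)
  omega

lemma nxt_prefix (hG : G.IsTree) {x y u : V} (hu : u ∈ (tp hG x y).support)
    (hxu : x ≠ u) : nxt hG x y = nxt hG x u := by
  have hlen : (tp hG x u).length ≠ 0 := fun h => hxu (Walk.eq_of_length_eq_zero h)
  unfold nxt
  rw [tp_split hG hu, getVert_append]
  rcases Nat.lt_or_ge 1 (tp hG x u).length with h | h
  · rw [if_pos h]
  · have h1 : (tp hG x u).length = 1 := by omega
    rw [if_neg (by omega), h1]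
    have h2 := (tp hG x u).getVert_length
    rw [h1] at h2
    simp [getVert_zero, h2]

/-- Two vertices on the same branch at `v` determine the same next vertex. -/
lemma same_branch_nxt (hG : G.IsTree) {v x y : V} (hv : v ∉ (tp hG x y).support) :
    nxt hG v x = nxt hG v y := by
  have hm₁ := med_mem₁ hG v x y
  have hm₂ := med_mem₂ hG v x y
  have hm₃ := med_mem₃ hG v x y
  have hne : v ≠ med hG v x y := by
    intro h; rw [← h] at hm₃; exact hv hm₃
  rw [nxt_prefix hG hm₁ hne, nxt_prefix hG hm₂ hne]

/-- A single edge is the tree path between its endpoints. -/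
lemma tp_adj (hG : G.IsTree) {x y : V} (h : G.Adj x y) :
    tp hG x y = Walk.cons h Walk.nil := by
  refine (tp_eq hG ?_).symm
  rw [cons_isPath_iff]
  exact ⟨IsPath.nil, by simp [h.ne]⟩

/-- Interior vertices of a path have two distinct neighbours, hence degree at least 2. -/
lemma interior_two_le_degree [DecidableRel G.Adj] (hG : G.IsTree) {x y w : V}
    (hw : w ∈ (tp hG x y).support) (hwx : w ≠ x) (hwy : w ≠ y) : 2 ≤ G.degree w := by
  have haw : G.Adj w (nxt hG w x) := nxt_adj hG hwx
  have hbw : G.Adj w (nxt hG w y) := nxt_adj hG hwy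
  have hab : nxt hG w x ≠ nxt hG w y := by
    intro hab
    have h1 : nxt hG w x ∈ (tp hG x w).support := mem_sup_symm hG (nxt_mem hG hwx)
    have h2 : nxt hG w x ∈ (tp hG w y).support := by rw [hab]; exact nxt_mem hG hwy
    exact haw.ne' (sup_split_unique hG hw h1 h2)
  have hsub : ({nxt hG w x, nxt hG w y} : Finset V) ⊆ G.neighborFinset w := by
    intro t ht
    rw [Finset.mem_insert, Finset.mem_singleton] at ht
    rcases ht with rfl | rfl
    · rwa [SimpleGraph.mem_neighborFinset]
    · rwa [SimpleGraph.mem_neighborFinset]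
  calc 2 = ({nxt hG w x, nxt hG w y} : Finset V).card := by
        rw [Finset.card_insert_of_notMem (by simpa using hab), Finset.card_singleton]
    _ ≤ _ := Finset.card_le_card hsub

variable {L : Type} {ℓ : L → V} [DecidableRel G.Adj]

/-- Every branch at a vertex contains a labelled leaf. -/
lemma exists_branch_leaf (hG : G.IsTree)
    (hdeg : ∀ v, G.degree v ≠ 1 → 3 ≤ G.degree v)
    (hleaf : ∀ v, G.degree v = 1 ↔ ∃ x, ℓ x = v)
    {v u : V} (hadj : G.Adj v u) :
    ∃ x : L, v ∉ (tp hG u (ℓ x)).support ∧ nxt hG v (ℓ x) = u := by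
  classical
  obtain ⟨w, hw', hmax⟩ := Finset.exists_max_image
    (Finset.univ.filter fun w => u ∈ (tp hG v w).support)
    (fun w => (tp hG v w).length) ⟨u, by simp [end_mem]⟩
  rw [Finset.mem_filter] at hw'
  have hw : u ∈ (tp hG v w).support := hw'.2
  have hwv : w ≠ v := by
    rintro rfl
    rw [tp_self] at hw
    simp only [Walk.support_nil, List.mem_singleton] at hw
    exact hadj.ne hw.symm
  -- w is a leaf
  have hdw : G.degree w = 1 := by
    by_contra hd
    have h3 := hdeg w hd
    set s := nxt hG w v with hs
    -- pick a neighbour of w different from s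
    have hcard : 0 < ((G.neighborFinset w).erase s).card := by
      have := Finset.card_erase_le (s := G.neighborFinset w) (a := s)
      have h4 : (G.neighborFinset w).card - 1 ≤ ((G.neighborFinset w).erase s).card :=
        Finset.pred_card_le_card_erase
      rw [card_neighborFinset_eq_degree] at h4
      omega
    obtain ⟨t, ht⟩ := Finset.card_pos.mp hcard
    rw [Finset.mem_erase, SimpleGraph.mem_neighborFinset] at ht
    have htadj : G.Adj w t := ht.2
    have hts : t ≠ s := ht.1
    -- t is not on the path from v to w
    have htsup : t ∉ (tp hG v w).support := by
      intro htmem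
      apply hts
      have htw : t ∈ (tp hG w v).support := mem_sup_symm hG htmem
      have h1 : nxt hG w v = nxt hG w t := nxt_prefix hG htw htadj.ne
      rw [hs, h1]
      unfold nxt
      rw [tp_adj hG htadj, ← Walk.snd, Walk.snd_cons]
    -- extend the path by the edge w–t
    have hWpath : ((tp hG v w).append (Walk.cons htadj Walk.nil)).IsPath := by
      refine isPath_append hG (tp_isPath _ _ _) ?_ fun z hz hz' => ?_
      · rw [cons_isPath_iff]; exact ⟨IsPath.nil, by simp [htadj.ne]⟩
      · have hz2 : z = w ∨ z = t := by
          simpa using hz'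
        rcases hz2 with rfl | rfl
        · rfl
        · exact absurd hz htsup
    have hlen := hmax t (by
      rw [Finset.mem_filter]
      refine ⟨Finset.mem_univ _, ?_⟩
      rw [← tp_eq hG hWpath, mem_support_append_iff]
      exact Or.inl hw)
    rw [← tp_eq hG hWpath, length_append] at hlen
    simp at hlen
  obtain ⟨x, hx⟩ := (hleaf w).mp hdw
  subst hx
  refine ⟨x, ?_, ?_⟩
  · intro hvmem
    exact hadj.ne (sup_split_unique hG (u := u) hw (start_mem hG v u) hvmem)
  · -- v ∉ sup(u, ℓ x), so tp v (ℓ x) = cons hadj (tp u (ℓ x))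
    have hvsup : v ∉ (tp hG u (ℓ x)).support := by
      intro hvmem
      exact hadj.ne (sup_split_unique hG (u := u) hw (start_mem hG v u) hvmem)
    have hpath : (Walk.cons hadj (tp hG u (ℓ x))).IsPath := by
      rw [cons_isPath_iff]
      exact ⟨tp_isPath _ _ _, hvsup⟩
    unfold nxt
    rw [← tp_eq hG hpath, ← Walk.snd, Walk.snd_cons]

lemma leaf_mem_iff (hG : G.IsTree)
    (hleaf : ∀ v, G.degree v = 1 ↔ ∃ x, ℓ x = v) (hinj : Function.Injective ℓ)
    (x y z : L) : ℓ z ∈ (tp hG (ℓ x) (ℓ y)).support ↔ z = x ∨ z = y := by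
  constructor
  · intro hmem
    by_contra hzc
    push_neg at hzc
    have h2 := interior_two_le_degree hG hmem
      (fun h => hzc.1 (hinj h)) (fun h => hzc.2 (hinj h))
    have h1 : G.degree (ℓ z) = 1 := (hleaf (ℓ z)).mpr ⟨z, rfl⟩
    omega
  · rintro (rfl | rfl)
    · exact start_mem hG _ _
    · exact end_mem hG _ _

lemma med_not_leaf (hG : G.IsTree)
    (hleaf : ∀ v, G.degree v = 1 ↔ ∃ x, ℓ x = v) (hinj : Function.Injective ℓ)
    {a b c : L} (hab : a ≠ b) (hac : a ≠ c) (hbc : b ≠ c) :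
    G.degree (med hG (ℓ a) (ℓ b) (ℓ c)) ≠ 1 := by
  intro hdeg1
  obtain ⟨z, hz⟩ := (hleaf _).mp hdeg1
  have h1 := (leaf_mem_iff hG hleaf hinj a b z).mp (hz ▸ med_mem₁ hG (ℓ a) (ℓ b) (ℓ c))
  have h2 := (leaf_mem_iff hG hleaf hinj a c z).mp (hz ▸ med_mem₂ hG (ℓ a) (ℓ b) (ℓ c))
  have h3 := (leaf_mem_iff hG hleaf hinj b c z).mp (hz ▸ med_mem₃ hG (ℓ a) (ℓ b) (ℓ c))
  rcases h1 with rfl | rfl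
  · rcases h3 with h3 | h3
    · exact hab h3
    · exact hac h3
  · rcases h2 with h2 | h2
    · exact hab h2.symm
    · exact hbc h2

lemma tp_self_mem (hG : G.IsTree) {v x : V} (h : v ∈ (tp hG x x).support) : v = x := by
  rw [tp_self] at h
  simpa using h

/-- Every internal vertex is the median of three distinct labelled leaves. -/
lemma internal_rep (hG : G.IsTree)
    (hdeg : ∀ v, G.degree v ≠ 1 → 3 ≤ G.degree v)
    (hleaf : ∀ v, G.degree v = 1 ↔ ∃ x, ℓ x = v)
    {v : V} (hv : G.degree v ≠ 1) :
    ∃ a b c : L, a ≠ b ∧ a ≠ c ∧ b ≠ c ∧ med hG (ℓ a) (ℓ b) (ℓ c) = v := by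
  classical
  have h3 := hdeg v hv
  rw [← card_neighborFinset_eq_degree] at h3
  have h0 : 0 < (G.neighborFinset v).card := by omega
  obtain ⟨u₁, hu₁⟩ := Finset.card_pos.mp h0
  have h2 : 0 < ((G.neighborFinset v).erase u₁).card := by
    have := Finset.pred_card_le_card_erase (s := G.neighborFinset v) (a := u₁)
    omega
  obtain ⟨u₂, hu₂⟩ := Finset.card_pos.mp h2
  have h1 : 0 < (((G.neighborFinset v).erase u₁).erase u₂).card := by
    have e1 := Finset.pred_card_le_card_erase (s := G.neighborFinset v) (a := u₁)
    have e2 := Finset.pred_card_le_card_erase (s := (G.neighborFinset v).erase u₁) (a := u₂)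
    omega
  obtain ⟨u₃, hu₃⟩ := Finset.card_pos.mp h1
  rw [Finset.mem_erase] at hu₂
  rw [Finset.mem_erase, Finset.mem_erase] at hu₃
  have ha₁ : G.Adj v u₁ := (SimpleGraph.mem_neighborFinset _ _ _).mp hu₁
  have ha₂ : G.Adj v u₂ := (SimpleGraph.mem_neighborFinset _ _ _).mp hu₂.2
  have ha₃ : G.Adj v u₃ := (SimpleGraph.mem_neighborFinset _ _ _).mp hu₃.2.2
  have h12 : u₁ ≠ u₂ := fun h => hu₂.1 h.symm
  have h13 : u₁ ≠ u₃ := fun h => hu₃.2.1 h.symm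
  have h23 : u₂ ≠ u₃ := fun h => hu₃.1 h.symm
  obtain ⟨a, hA1, hA2⟩ := exists_branch_leaf hG hdeg hleaf ha₁
  obtain ⟨b, hB1, hB2⟩ := exists_branch_leaf hG hdeg hleaf ha₂
  obtain ⟨c, hC1, hC2⟩ := exists_branch_leaf hG hdeg hleaf ha₃
  have key : ∀ (p q : L) (up uq : V), nxt hG v (ℓ p) = up → nxt hG v (ℓ q) = uq →
      up ≠ uq → v ∈ (tp hG (ℓ p) (ℓ q)).support := by
    intro p q up uq hp hq hpq
    by_contra hvn
    exact hpq (hp ▸ hq ▸ same_branch_nxt hG hvn)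
  have hab' := key a b u₁ u₂ hA2 hB2 h12
  have hac' := key a c u₁ u₃ hA2 hC2 h13
  have hbc' := key b c u₂ u₃ hB2 hC2 h23
  have hlv : ∀ (p : L) (up : V), v ∉ (tp hG up (ℓ p)).support → ℓ p ≠ v := by
    intro p up hnp h
    exact hnp (h ▸ end_mem hG up (ℓ p))
  have hmed := med_char hG hab' hac' hbc'
  refine ⟨a, b, c, ?_, ?_, ?_, hmed.symm⟩
  · rintro rfl
    exact hlv a u₁ hA1 (tp_self_mem hG hab').symm
  · rintro rfl
    exact hlv a u₁ hA1 (tp_self_mem hG hac').symm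
  · rintro rfl
    exact hlv b u₂ hB1 (tp_self_mem hG hbc').symm

/-- Extension lemma: a path avoiding `u` can be extended beyond `v` to a leaf, still
avoiding `u`. -/
lemma ext_lemma (hG : G.IsTree)
    (hdeg : ∀ v, G.degree v ≠ 1 → 3 ≤ G.degree v)
    (hleaf : ∀ v, G.degree v = 1 ↔ ∃ x, ℓ x = v)
    {u v w : V} (hu : u ∉ (tp hG v w).support) :
    ∃ x : L, v ∈ (tp hG (ℓ x) w).support ∧ u ∉ (tp hG (ℓ x) w).support := by
  classical
  by_cases hdv : G.degree v = 1
  · obtain ⟨x, hx⟩ := (hleaf v).mp hdv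
    subst hx
    exact ⟨x, start_mem hG _ _, hu⟩
  · have h3 := hdeg v hdv
    have huv : u ≠ v := fun h => hu (h ▸ start_mem hG v w)
    rw [← card_neighborFinset_eq_degree] at h3
    have hcard : 0 < ((G.neighborFinset v) \ {nxt hG v w, nxt hG v u}).card := by
      have hle := Finset.card_le_card (Finset.sdiff_subset
        (s := G.neighborFinset v) (t := {nxt hG v w, nxt hG v u}))
      have h2 : ({nxt hG v w, nxt hG v u} : Finset V).card ≤ 2 :=
        Finset.card_insert_le _ _ |>.trans (by simp)
      have := Finset.le_card_sdiff ({nxt hG v w, nxt hG v u} : Finset V) (G.neighborFinset v)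
      omega
    obtain ⟨n, hn⟩ := Finset.card_pos.mp hcard
    rw [Finset.mem_sdiff, SimpleGraph.mem_neighborFinset] at hn
    have hadj : G.Adj v n := hn.1
    have hnw : n ≠ nxt hG v w := fun h => hn.2 (by simp [h])
    have hnu : n ≠ nxt hG v u := fun h => hn.2 (by simp [h])
    obtain ⟨x, hx1, hx2⟩ := exists_branch_leaf hG hdeg hleaf hadj
    by_cases hwv : w = v
    · subst hwv
      refine ⟨x, end_mem hG _ _, ?_⟩
      intro hmem
      apply hnu
      have hmem' : u ∈ (tp hG w (ℓ x)).support := mem_sup_symm hG hmem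
      rw [← hx2, nxt_prefix hG hmem' (Ne.symm huv)]
    · have hvmem : v ∈ (tp hG (ℓ x) w).support := by
        by_contra hvn
        exact hnw (hx2 ▸ same_branch_nxt hG hvn)
      refine ⟨x, hvmem, ?_⟩
      intro hmem
      rw [tp_split hG hvmem, mem_support_append_iff] at hmem
      rcases hmem with hmem | hmem
      · apply hnu
        have hmem' : u ∈ (tp hG v (ℓ x)).support := mem_sup_symm hG hmem
        rw [← hx2, nxt_prefix hG hmem' (Ne.symm huv)]
      · exact hu hmem

/-- Betweenness is characterized by membership in leaf paths. -/
lemma bet_char (hG : G.IsTree)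
    (hdeg : ∀ v, G.degree v ≠ 1 → 3 ≤ G.degree v)
    (hleaf : ∀ v, G.degree v = 1 ↔ ∃ x, ℓ x = v)
    (u v w : V) :
    u ∈ (tp hG v w).support ↔ ∀ x y : L, v ∈ (tp hG (ℓ x) (ℓ y)).support →
      w ∈ (tp hG (ℓ x) (ℓ y)).support → u ∈ (tp hG (ℓ x) (ℓ y)).support := by
  constructor
  · intro hu x y hv hw
    exact (sup_mem_mem hG hv hw).1 u hu
  · intro h
    by_contra hu
    obtain ⟨x, hvx, hux⟩ := ext_lemma hG hdeg hleaf hu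
    have hux' : u ∉ (tp hG w (ℓ x)).support := fun hh => hux (mem_sup_symm hG hh)
    obtain ⟨y, hwy, huy⟩ := ext_lemma hG hdeg hleaf hux'
    apply huy
    refine h y x ?_ hwy
    have hw' : w ∈ (tp hG (ℓ x) (ℓ y)).support := mem_sup_symm hG hwy
    exact mem_sup_symm hG (sup_left_subset hG hw' hvx)

/-- Membership of an internal vertex in a leaf path is characterized by medians. -/
lemma mem_char (hG : G.IsTree)
    (hdeg : ∀ v, G.degree v ≠ 1 → 3 ≤ G.degree v)
    (hleaf : ∀ v, G.degree v = 1 ↔ ∃ x, ℓ x = v)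
    {u : V} (hu : G.degree u ≠ 1) {x y : L} :
    u ∈ (tp hG (ℓ x) (ℓ y)).support ↔
      ∃ z : L, z ≠ x ∧ z ≠ y ∧ med hG (ℓ x) (ℓ y) (ℓ z) = u := by
  classical
  constructor
  · intro hmem
    have hux : u ≠ ℓ x := fun h => hu ((hleaf u).mpr ⟨x, h.symm⟩)
    have huy : u ≠ ℓ y := fun h => hu ((hleaf u).mpr ⟨y, h.symm⟩)
    have h3 := hdeg u hu
    rw [← card_neighborFinset_eq_degree] at h3
    have hcard : 0 < ((G.neighborFinset u) \ {nxt hG u (ℓ x), nxt hG u (ℓ y)}).card := by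
      have := Finset.le_card_sdiff ({nxt hG u (ℓ x), nxt hG u (ℓ y)} : Finset V)
        (G.neighborFinset u)
      have h2 : ({nxt hG u (ℓ x), nxt hG u (ℓ y)} : Finset V).card ≤ 2 :=
        Finset.card_insert_le _ _ |>.trans (by simp)
      omega
    obtain ⟨n, hn⟩ := Finset.card_pos.mp hcard
    rw [Finset.mem_sdiff, SimpleGraph.mem_neighborFinset] at hn
    have hadj : G.Adj u n := hn.1
    have hnx : n ≠ nxt hG u (ℓ x) := fun h => hn.2 (by simp [h])
    have hny : n ≠ nxt hG u (ℓ y) := fun h => hn.2 (by simp [h])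
    obtain ⟨z, hz1, hz2⟩ := exists_branch_leaf hG hdeg hleaf hadj
    have hxz : u ∈ (tp hG (ℓ x) (ℓ z)).support := by
      by_contra hun
      have := same_branch_nxt hG hun
      exact hnx (by rw [← hz2, this])
    have hyz : u ∈ (tp hG (ℓ y) (ℓ z)).support := by
      by_contra hun
      have := same_branch_nxt hG hun
      exact hny (by rw [← hz2, this])
    have hmed := med_char hG hmem hxz hyz
    refine ⟨z, ?_, ?_, hmed.symm⟩
    · rintro rfl
      exact hux (tp_self_mem hG hxz)
    · rintro rfl
      exact huy (tp_self_mem hG hyz)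
  · rintro ⟨z, _, _, rfl⟩
    exact med_mem₁ hG _ _ _

/-- Adjacency in a tree is characterized by betweenness. -/
lemma adj_char (hG : G.IsTree) (v w : V) :
    G.Adj v w ↔ v ≠ w ∧ ∀ u ∈ (tp hG v w).support, u = v ∨ u = w := by
  constructor
  · intro h
    refine ⟨h.ne, ?_⟩
    rw [tp_adj hG h]
    intro u hu
    simpa using hu
  · rintro ⟨hne, hmem⟩
    obtain ⟨u', h', q, hq⟩ := Walk.not_nil_iff.mp (tp_not_nil hG hne)
    by_cases huw : u' = w
    · subst huw
      exact h'
    · have hu'mem : u' ∈ (tp hG v w).support := by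
        rw [hq]
        simp
      rcases hmem u' hu'mem with h1 | h1
      · exact absurd h1 h'.ne'
      · exact absurd h1 huw

section Transfer

variable {V₁ V₂ : Type} [DecidableEq V₁] [DecidableEq V₂] [Fintype V₁] [Fintype V₂]
  {G₁ : SimpleGraph V₁} {G₂ : SimpleGraph V₂} {ℓ₁ : L → V₁} {ℓ₂ : L → V₂}

lemma pick3 {Pd Pe Pf Qd Qe Qf : Prop} (A1 : Pd ∨ Pe) (A2 : Pd ∨ Pf) (A3 : Pe ∨ Pf)
    (B1 : Qd ∨ Qe) (B2 : Qd ∨ Qf) (B3 : Qe ∨ Qf) :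
    (Pd ∧ Qd) ∨ (Pe ∧ Qe) ∨ (Pf ∧ Qf) := by tauto

/-- One step: replacing one element of a triple sharing two elements. -/
lemma med_step (hG₁ : G₁.IsTree) (hG₂ : G₂.IsTree)
    (hdisj : ∀ a b c d : L, a ≠ b → a ≠ c → a ≠ d → b ≠ c → b ≠ d → c ≠ d →
      (∀ e ∈ (tp hG₁ (ℓ₁ a) (ℓ₁ b)).edges, e ∉ (tp hG₁ (ℓ₁ c) (ℓ₁ d)).edges) →
      (∀ e ∈ (tp hG₂ (ℓ₂ a) (ℓ₂ b)).edges, e ∉ (tp hG₂ (ℓ₂ c) (ℓ₂ d)).edges))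
    {x y z w : L} (hxy : x ≠ y) (hxz : x ≠ z) (hyz : y ≠ z) (hxw : x ≠ w) (hyw : y ≠ w)
    (h : med hG₁ (ℓ₁ x) (ℓ₁ y) (ℓ₁ z) = med hG₁ (ℓ₁ x) (ℓ₁ y) (ℓ₁ w)) :
    med hG₂ (ℓ₂ x) (ℓ₂ y) (ℓ₂ z) = med hG₂ (ℓ₂ x) (ℓ₂ y) (ℓ₂ w) := by
  by_cases hzw : z = w
  · subst hzw; rfl
  · exact (med_eq_iff_disjoint hG₂ _ _ _ _).mpr
      (hdisj x y z w hxy hxz hxw hyz hyw hzw ((med_eq_iff_disjoint hG₁ _ _ _ _).mp h))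

lemma med_chain (hG₁ : G₁.IsTree) (hG₂ : G₂.IsTree)
    (hdisj : ∀ a b c d : L, a ≠ b → a ≠ c → a ≠ d → b ≠ c → b ≠ d → c ≠ d →
      (∀ e ∈ (tp hG₁ (ℓ₁ a) (ℓ₁ b)).edges, e ∉ (tp hG₁ (ℓ₁ c) (ℓ₁ d)).edges) →
      (∀ e ∈ (tp hG₂ (ℓ₂ a) (ℓ₂ b)).edges, e ∉ (tp hG₂ (ℓ₂ c) (ℓ₂ d)).edges))
    {v : V₁} (hne : ∀ p q : L, v ∈ (tp hG₁ (ℓ₁ p) (ℓ₁ q)).support → p ≠ q)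
    {a b c p q r : L}
    (Sab : v ∈ (tp hG₁ (ℓ₁ a) (ℓ₁ b)).support)
    (Sac : v ∈ (tp hG₁ (ℓ₁ a) (ℓ₁ c)).support)
    (Sbc : v ∈ (tp hG₁ (ℓ₁ b) (ℓ₁ c)).support)
    (Sap : v ∈ (tp hG₁ (ℓ₁ a) (ℓ₁ p)).support)
    (Sbp : v ∈ (tp hG₁ (ℓ₁ b) (ℓ₁ p)).support)
    (Sbq : v ∈ (tp hG₁ (ℓ₁ b) (ℓ₁ q)).support)
    (Spq : v ∈ (tp hG₁ (ℓ₁ p) (ℓ₁ q)).support)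
    (Spr : v ∈ (tp hG₁ (ℓ₁ p) (ℓ₁ r)).support)
    (Sqr : v ∈ (tp hG₁ (ℓ₁ q) (ℓ₁ r)).support) :
    med hG₂ (ℓ₂ a) (ℓ₂ b) (ℓ₂ c) = med hG₂ (ℓ₂ p) (ℓ₂ q) (ℓ₂ r) := by
  have Sba := mem_sup_symm hG₁ Sab
  have Spa := mem_sup_symm hG₁ Sap
  have Spb := mem_sup_symm hG₁ Sbp
  have Sqb := mem_sup_symm hG₁ Sbq
  have hab := hne a b Sab
  have hac := hne a c Sac
  have hbc := hne b c Sbc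
  have hap := hne a p Sap
  have hbp := hne b p Sbp
  have hbq := hne b q Sbq
  have hpq := hne p q Spq
  have hpr := hne p r Spr
  have hqr := hne q r Sqr
  have E1 : med hG₂ (ℓ₂ a) (ℓ₂ b) (ℓ₂ c) = med hG₂ (ℓ₂ a) (ℓ₂ b) (ℓ₂ p) :=
    med_step hG₁ hG₂ hdisj hab hac hbc hap hbp
      ((med_char hG₁ Sab Sac Sbc).symm.trans (med_char hG₁ Sab Sap Sbp))
  have E2 : med hG₂ (ℓ₂ b) (ℓ₂ p) (ℓ₂ a) = med hG₂ (ℓ₂ b) (ℓ₂ p) (ℓ₂ q) :=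
    med_step hG₁ hG₂ hdisj hbp hab.symm hap.symm hbq hpq
      ((med_char hG₁ Sbp Sba Spa).symm.trans (med_char hG₁ Sbp Sbq Spq))
  have E3 : med hG₂ (ℓ₂ p) (ℓ₂ q) (ℓ₂ b) = med hG₂ (ℓ₂ p) (ℓ₂ q) (ℓ₂ r) :=
    med_step hG₁ hG₂ hdisj hpq hbp.symm hbq.symm hpr hqr
      ((med_char hG₁ Spq Spb Sqb).symm.trans (med_char hG₁ Spq Spr Sqr))
  calc med hG₂ (ℓ₂ a) (ℓ₂ b) (ℓ₂ c) = med hG₂ (ℓ₂ a) (ℓ₂ b) (ℓ₂ p) := E1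
    _ = med hG₂ (ℓ₂ b) (ℓ₂ p) (ℓ₂ a) := med_rot hG₂ _ _ _
    _ = med hG₂ (ℓ₂ b) (ℓ₂ p) (ℓ₂ q) := E2
    _ = med hG₂ (ℓ₂ p) (ℓ₂ q) (ℓ₂ b) := med_rot hG₂ _ _ _
    _ = med hG₂ (ℓ₂ p) (ℓ₂ q) (ℓ₂ r) := E3

/-- The transfer lemma: equality of medians of labelled triples transfers along matching
path-disjointness data. -/
lemma med_transfer (hG₁ : G₁.IsTree) (hG₂ : G₂.IsTree) [DecidableRel G₁.Adj]
    (hleaf₁ : ∀ v, G₁.degree v = 1 ↔ ∃ x, ℓ₁ x = v) (hinj₁ : Function.Injective ℓ₁)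
    (hdisj : ∀ a b c d : L, a ≠ b → a ≠ c → a ≠ d → b ≠ c → b ≠ d → c ≠ d →
      (∀ e ∈ (tp hG₁ (ℓ₁ a) (ℓ₁ b)).edges, e ∉ (tp hG₁ (ℓ₁ c) (ℓ₁ d)).edges) →
      (∀ e ∈ (tp hG₂ (ℓ₂ a) (ℓ₂ b)).edges, e ∉ (tp hG₂ (ℓ₂ c) (ℓ₂ d)).edges))
    {a b c d e f : L} (hab : a ≠ b) (hac : a ≠ c) (hbc : b ≠ c)
    (hde : d ≠ e) (hdf : d ≠ f) (hef : e ≠ f)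
    (h : med hG₁ (ℓ₁ a) (ℓ₁ b) (ℓ₁ c) = med hG₁ (ℓ₁ d) (ℓ₁ e) (ℓ₁ f)) :
    med hG₂ (ℓ₂ a) (ℓ₂ b) (ℓ₂ c) = med hG₂ (ℓ₂ d) (ℓ₂ e) (ℓ₂ f) := by
  classical
  set v := med hG₁ (ℓ₁ a) (ℓ₁ b) (ℓ₁ c) with hv
  have hvdeg : G₁.degree v ≠ 1 := med_not_leaf hG₁ hleaf₁ hinj₁ hab hac hbc
  have hne : ∀ p q : L, v ∈ (tp hG₁ (ℓ₁ p) (ℓ₁ q)).support → p ≠ q := by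
    intro p q hm hpq
    subst hpq
    exact hvdeg ((hleaf₁ v).mpr ⟨p, (tp_self_mem hG₁ hm).symm⟩)
  have Sab : v ∈ (tp hG₁ (ℓ₁ a) (ℓ₁ b)).support := med_mem₁ hG₁ _ _ _
  have Sac : v ∈ (tp hG₁ (ℓ₁ a) (ℓ₁ c)).support := med_mem₂ hG₁ _ _ _
  have Sbc : v ∈ (tp hG₁ (ℓ₁ b) (ℓ₁ c)).support := med_mem₃ hG₁ _ _ _
  have Sde : v ∈ (tp hG₁ (ℓ₁ d) (ℓ₁ e)).support := by
    rw [h]; exact med_mem₁ hG₁ _ _ _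
  have Sdf : v ∈ (tp hG₁ (ℓ₁ d) (ℓ₁ f)).support := by
    rw [h]; exact med_mem₂ hG₁ _ _ _
  have Sef : v ∈ (tp hG₁ (ℓ₁ e) (ℓ₁ f)).support := by
    rw [h]; exact med_mem₃ hG₁ _ _ _
  have sym : ∀ {p q : L}, v ∈ (tp hG₁ (ℓ₁ p) (ℓ₁ q)).support →
      v ∈ (tp hG₁ (ℓ₁ q) (ℓ₁ p)).support := fun hm => mem_sup_symm hG₁ hm
  have hR : ∀ p q r : L, v ∈ (tp hG₁ (ℓ₁ p) (ℓ₁ r)).support →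
      v ∈ (tp hG₁ (ℓ₁ p) (ℓ₁ q)).support ∨ v ∈ (tp hG₁ (ℓ₁ q) (ℓ₁ r)).support := by
    intro p q r hm
    have := tp_support_subset hG₁
      ((tp hG₁ (ℓ₁ p) (ℓ₁ q)).append (tp hG₁ (ℓ₁ q) (ℓ₁ r))) hm
    rwa [mem_support_append_iff] at this
  have A1 := (hR d a e Sde).imp (fun h => sym h) id
  have A2 := (hR d a f Sdf).imp (fun h => sym h) id
  have A3 := (hR e a f Sef).imp (fun h => sym h) id
  have B1 := (hR d b e Sde).imp (fun h => sym h) id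
  have B2 := (hR d b f Sdf).imp (fun h => sym h) id
  have B3 := (hR e b f Sef).imp (fun h => sym h) id
  -- there is a "good" element among d, e, f, lying in different branches from a and b
  have hgood :
      (v ∈ (tp hG₁ (ℓ₁ a) (ℓ₁ d)).support ∧ v ∈ (tp hG₁ (ℓ₁ b) (ℓ₁ d)).support) ∨
      (v ∈ (tp hG₁ (ℓ₁ a) (ℓ₁ e)).support ∧ v ∈ (tp hG₁ (ℓ₁ b) (ℓ₁ e)).support) ∨
      (v ∈ (tp hG₁ (ℓ₁ a) (ℓ₁ f)).support ∧ v ∈ (tp hG₁ (ℓ₁ b) (ℓ₁ f)).support) :=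
    pick3 A1 A2 A3 B1 B2 B3
  rcases hgood with ⟨Sad, Sbd⟩ | ⟨Sae, Sbe⟩ | ⟨Saf, Sbf⟩
  · rcases B3 with Sbe | Sbf
    · exact med_chain hG₁ hG₂ hdisj hne Sab Sac Sbc Sad Sbd Sbe Sde Sdf Sef
    · exact (med_chain hG₁ hG₂ hdisj hne Sab Sac Sbc Sad Sbd Sbf Sdf Sde (sym Sef)).trans
        (med_comm₂₃ hG₂ _ _ _).symm
  · rcases B2 with Sbd | Sbf
    · exact (med_chain hG₁ hG₂ hdisj hne Sab Sac Sbc Sae Sbe Sbd (sym Sde) Sef Sdf).trans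
        (med_comm₁₂ hG₂ _ _ _).symm
    · exact (med_chain hG₁ hG₂ hdisj hne Sab Sac Sbc Sae Sbe Sbf Sef (sym Sde)
        (sym Sdf)).trans (med_rot hG₂ _ _ _).symm
  · rcases B1 with Sbd | Sbe
    · exact (med_chain hG₁ hG₂ hdisj hne Sab Sac Sbc Saf Sbf Sbd (sym Sdf) (sym Sef)
        Sde).trans ((med_rot hG₂ (ℓ₂ d) (ℓ₂ e) (ℓ₂ f)).trans
          (med_rot hG₂ (ℓ₂ e) (ℓ₂ f) (ℓ₂ d))).symm
    · exact (med_chain hG₁ hG₂ hdisj hne Sab Sac Sbc Saf Sbf Sbe (sym Sef) (sym Sdf)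
        (sym Sde)).trans (((med_rot hG₂ (ℓ₂ d) (ℓ₂ e) (ℓ₂ f)).trans
          (med_rot hG₂ (ℓ₂ e) (ℓ₂ f) (ℓ₂ d))).trans
            (med_comm₂₃ hG₂ (ℓ₂ f) (ℓ₂ d) (ℓ₂ e))).symm
  done

end Transfer

end TreeRecon

open TreeRecon

/-- Two finite trees whose non-leaf vertices have degree at least 3, with leaves labeled
bijectively by a common label set `L` of size at least 3, are isomorphic by a
label-preserving graph isomorphism as soon as, for every quadruple of pairwise distinct
labels `a, b, c, d`, the (unique) path between the leaves labeled `a` and `b` is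
edge-disjoint from the (unique) path between the leaves labeled `c` and `d` in the first
tree iff the corresponding paths are edge-disjoint in the second tree. -/
theorem combinatorial_type_determined_by_path_disjointness
    {V₁ V₂ L : Type} [Fintype V₁] [Fintype V₂] [Fintype L]
    [DecidableEq V₁] [DecidableEq V₂]
    (G₁ : SimpleGraph V₁) (G₂ : SimpleGraph V₂)
    [DecidableRel G₁.Adj] [DecidableRel G₂.Adj]
    (h₁ : G₁.IsTree) (h₂ : G₂.IsTree)
    (hdeg₁ : ∀ v, G₁.degree v ≠ 1 → 3 ≤ G₁.degree v)
    (hdeg₂ : ∀ v, G₂.degree v ≠ 1 → 3 ≤ G₂.degree v)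
    (ℓ₁ : L → V₁) (ℓ₂ : L → V₂)
    (hinj₁ : Function.Injective ℓ₁) (hinj₂ : Function.Injective ℓ₂)
    (hleaf₁ : ∀ v, G₁.degree v = 1 ↔ ∃ x, ℓ₁ x = v)
    (hleaf₂ : ∀ v, G₂.degree v = 1 ↔ ∃ x, ℓ₂ x = v)
    (hL : 3 ≤ Fintype.card L)
    (hiff : ∀ a b c d : L, a ≠ b → a ≠ c → a ≠ d → b ≠ c → b ≠ d → c ≠ d →
      ((∀ (P : G₁.Walk (ℓ₁ a) (ℓ₁ b)) (Q : G₁.Walk (ℓ₁ c) (ℓ₁ d)),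
          P.IsPath → Q.IsPath → ∀ e ∈ P.edges, e ∉ Q.edges) ↔
       (∀ (P : G₂.Walk (ℓ₂ a) (ℓ₂ b)) (Q : G₂.Walk (ℓ₂ c) (ℓ₂ d)),
          P.IsPath → Q.IsPath → ∀ e ∈ P.edges, e ∉ Q.edges))) :
    ∃ φ : G₁ ≃g G₂, ∀ x : L, φ (ℓ₁ x) = ℓ₂ x := by
  classical
  have hdisj₁₂ : ∀ a b c d : L, a ≠ b → a ≠ c → a ≠ d → b ≠ c → b ≠ d → c ≠ d →
      (∀ e ∈ (tp h₁ (ℓ₁ a) (ℓ₁ b)).edges, e ∉ (tp h₁ (ℓ₁ c) (ℓ₁ d)).edges) →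
      (∀ e ∈ (tp h₂ (ℓ₂ a) (ℓ₂ b)).edges, e ∉ (tp h₂ (ℓ₂ c) (ℓ₂ d)).edges) := by
    intro a b c d k1 k2 k3 k4 k5 k6 hd
    exact (disj_iff_tp h₂ _ _ _ _).mp ((hiff a b c d k1 k2 k3 k4 k5 k6).mp
      ((disj_iff_tp h₁ _ _ _ _).mpr hd))
  have hdisj₂₁ : ∀ a b c d : L, a ≠ b → a ≠ c → a ≠ d → b ≠ c → b ≠ d → c ≠ d →
      (∀ e ∈ (tp h₂ (ℓ₂ a) (ℓ₂ b)).edges, e ∉ (tp h₂ (ℓ₂ c) (ℓ₂ d)).edges) →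
      (∀ e ∈ (tp h₁ (ℓ₁ a) (ℓ₁ b)).edges, e ∉ (tp h₁ (ℓ₁ c) (ℓ₁ d)).edges) := by
    intro a b c d k1 k2 k3 k4 k5 k6 hd
    exact (disj_iff_tp h₁ _ _ _ _).mp ((hiff a b c d k1 k2 k3 k4 k5 k6).mpr
      ((disj_iff_tp h₂ _ _ _ _).mpr hd))
  have T : ∀ a b c d e f : L, a ≠ b → a ≠ c → b ≠ c → d ≠ e → d ≠ f → e ≠ f →
      (med h₁ (ℓ₁ a) (ℓ₁ b) (ℓ₁ c) = med h₁ (ℓ₁ d) (ℓ₁ e) (ℓ₁ f) ↔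
       med h₂ (ℓ₂ a) (ℓ₂ b) (ℓ₂ c) = med h₂ (ℓ₂ d) (ℓ₂ e) (ℓ₂ f)) := by
    intro a b c d e f k1 k2 k3 k4 k5 k6
    exact ⟨med_transfer h₁ h₂ hleaf₁ hinj₁ hdisj₁₂ k1 k2 k3 k4 k5 k6,
           med_transfer h₂ h₁ hleaf₂ hinj₂ hdisj₂₁ k1 k2 k3 k4 k5 k6⟩
  have hrep₁ : ∀ v : V₁, ¬(∃ x, ℓ₁ x = v) → ∃ a b c : L, a ≠ b ∧ a ≠ c ∧ b ≠ c ∧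
      med h₁ (ℓ₁ a) (ℓ₁ b) (ℓ₁ c) = v :=
    fun v hv => internal_rep h₁ hdeg₁ hleaf₁ (fun hd => hv ((hleaf₁ v).mp hd))
  have hrep₂ : ∀ v : V₂, ¬(∃ x, ℓ₂ x = v) → ∃ a b c : L, a ≠ b ∧ a ≠ c ∧ b ≠ c ∧
      med h₂ (ℓ₂ a) (ℓ₂ b) (ℓ₂ c) = v :=
    fun v hv => internal_rep h₂ hdeg₂ hleaf₂ (fun hd => hv ((hleaf₂ v).mp hd))
  have hrep₁' := hrep₁
  choose A₁ B₁ C₁ hAB₁ hAC₁ hBC₁ hM₁ using hrep₁'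
  have hrep₂' := hrep₂
  choose A₂ B₂ C₂ hAB₂ hAC₂ hBC₂ hM₂ using hrep₂'
  -- the map on vertices
  obtain ⟨f, f_leaf, f_not_leaf, f_med⟩ : ∃ f : V₁ → V₂,
      (∀ x : L, f (ℓ₁ x) = ℓ₂ x) ∧
      (∀ v : V₁, ¬(∃ x, ℓ₁ x = v) → ¬(∃ z, ℓ₂ z = f v)) ∧
      (∀ (v : V₁) (a b c : L), ¬(∃ x, ℓ₁ x = v) → a ≠ b → a ≠ c → b ≠ c →
        med h₁ (ℓ₁ a) (ℓ₁ b) (ℓ₁ c) = v → f v = med h₂ (ℓ₂ a) (ℓ₂ b) (ℓ₂ c)) := by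
    refine ⟨fun v => if h : ∃ x, ℓ₁ x = v then ℓ₂ (Classical.choose h)
      else med h₂ (ℓ₂ (A₁ v h)) (ℓ₂ (B₁ v h)) (ℓ₂ (C₁ v h)), ?_, ?_, ?_⟩
    · intro x
      have hx : ∃ z, ℓ₁ z = ℓ₁ x := ⟨x, rfl⟩
      simp only [dif_pos hx]
      exact congrArg ℓ₂ (hinj₁ (Classical.choose_spec hx))
    · intro v hv
      simp only [dif_neg hv]
      intro hz
      obtain ⟨z, hz⟩ := hz
      exact med_not_leaf h₂ hleaf₂ hinj₂ (hAB₁ v hv) (hAC₁ v hv) (hBC₁ v hv)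
        ((hleaf₂ _).mpr ⟨z, hz⟩)
    · intro v a b c hv k1 k2 k3 hm
      simp only [dif_neg hv]
      exact (T (A₁ v hv) (B₁ v hv) (C₁ v hv) a b c (hAB₁ v hv) (hAC₁ v hv) (hBC₁ v hv)
        k1 k2 k3).mp ((hM₁ v hv).trans hm.symm)
  obtain ⟨g, g_leaf, g_not_leaf, g_med⟩ : ∃ g : V₂ → V₁,
      (∀ x : L, g (ℓ₂ x) = ℓ₁ x) ∧
      (∀ v : V₂, ¬(∃ x, ℓ₂ x = v) → ¬(∃ z, ℓ₁ z = g v)) ∧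
      (∀ (v : V₂) (a b c : L), ¬(∃ x, ℓ₂ x = v) → a ≠ b → a ≠ c → b ≠ c →
        med h₂ (ℓ₂ a) (ℓ₂ b) (ℓ₂ c) = v → g v = med h₁ (ℓ₁ a) (ℓ₁ b) (ℓ₁ c)) := by
    refine ⟨fun v => if h : ∃ x, ℓ₂ x = v then ℓ₁ (Classical.choose h)
      else med h₁ (ℓ₁ (A₂ v h)) (ℓ₁ (B₂ v h)) (ℓ₁ (C₂ v h)), ?_, ?_, ?_⟩
    · intro x
      have hx : ∃ z, ℓ₂ z = ℓ₂ x := ⟨x, rfl⟩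
      simp only [dif_pos hx]
      exact congrArg ℓ₁ (hinj₂ (Classical.choose_spec hx))
    · intro v hv
      simp only [dif_neg hv]
      intro hz
      obtain ⟨z, hz⟩ := hz
      exact med_not_leaf h₁ hleaf₁ hinj₁ (hAB₂ v hv) (hAC₂ v hv) (hBC₂ v hv)
        ((hleaf₁ _).mpr ⟨z, hz⟩)
    · intro v a b c hv k1 k2 k3 hm
      simp only [dif_neg hv]
      exact (T a b c (A₂ v hv) (B₂ v hv) (C₂ v hv) k1 k2 k3 (hAB₂ v hv) (hAC₂ v hv)
        (hBC₂ v hv)).mpr ((hM₂ v hv).trans hm.symm).symm |>.symm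
  -- f and g are mutually inverse
  have gf : ∀ v : V₁, g (f v) = v := by
    intro v
    by_cases h : ∃ x, ℓ₁ x = v
    · obtain ⟨x, rfl⟩ := h
      rw [f_leaf, g_leaf]
    · obtain ⟨a, b, c, k1, k2, k3, hm⟩ := hrep₁ v h
      have hfv : f v = med h₂ (ℓ₂ a) (ℓ₂ b) (ℓ₂ c) := f_med v a b c h k1 k2 k3 hm
      have := g_med (f v) a b c (f_not_leaf v h) k1 k2 k3 hfv.symm
      rw [this, hm]
  have fg : ∀ v : V₂, f (g v) = v := by
    intro v
    by_cases h : ∃ x, ℓ₂ x = v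
    · obtain ⟨x, rfl⟩ := h
      rw [g_leaf, f_leaf]
    · obtain ⟨a, b, c, k1, k2, k3, hm⟩ := hrep₂ v h
      have hgv : g v = med h₁ (ℓ₁ a) (ℓ₁ b) (ℓ₁ c) := g_med v a b c h k1 k2 k3 hm
      have := f_med (g v) a b c (g_not_leaf v h) k1 k2 k3 hgv.symm
      rw [this, hm]
  have finj : Function.Injective f := Function.LeftInverse.injective gf
  -- membership in leaf paths is preserved
  have MP : ∀ (u : V₁) (x y : L),
      u ∈ (tp h₁ (ℓ₁ x) (ℓ₁ y)).support ↔ f u ∈ (tp h₂ (ℓ₂ x) (ℓ₂ y)).support := by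
    intro u x y
    by_cases hxy : x = y
    · subst hxy
      rw [tp_self h₁, tp_self h₂]
      simp only [Walk.support_nil, List.mem_singleton]
      constructor
      · rintro rfl
        exact f_leaf x
      · intro hfu
        apply finj
        rw [hfu, f_leaf]
    · by_cases hu : ∃ z, ℓ₁ z = u
      · obtain ⟨z, rfl⟩ := hu
        rw [leaf_mem_iff h₁ hleaf₁ hinj₁ x y z, f_leaf,
          leaf_mem_iff h₂ hleaf₂ hinj₂ x y z]
      · have hud : G₁.degree u ≠ 1 := fun hd => hu ((hleaf₁ u).mp hd)
        have hfu := f_not_leaf u hu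
        have hfud : G₂.degree (f u) ≠ 1 := fun hd => hfu ((hleaf₂ _).mp hd)
        rw [mem_char h₁ hdeg₁ hleaf₁ hud, mem_char h₂ hdeg₂ hleaf₂ hfud]
        obtain ⟨a, b, c, k1, k2, k3, hm⟩ := hrep₁ u hu
        have hfmed : f u = med h₂ (ℓ₂ a) (ℓ₂ b) (ℓ₂ c) := f_med u a b c hu k1 k2 k3 hm
        constructor
        · rintro ⟨z, hzx, hzy, hmz⟩
          refine ⟨z, hzx, hzy, ?_⟩
          rw [hfmed]
          exact (T x y z a b c hxy (Ne.symm hzx) (Ne.symm hzy) k1 k2 k3).mp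
            (hmz.trans hm.symm)
        · rintro ⟨z, hzx, hzy, hmz⟩
          refine ⟨z, hzx, hzy, ?_⟩
          rw [hfmed] at hmz
          have := (T x y z a b c hxy (Ne.symm hzx) (Ne.symm hzy) k1 k2 k3).mpr hmz
          rw [this, hm]
  -- betweenness is preserved
  have BP : ∀ u v w : V₁,
      u ∈ (tp h₁ v w).support ↔ f u ∈ (tp h₂ (f v) (f w)).support := by
    intro u v w
    rw [bet_char h₁ hdeg₁ hleaf₁ u v w, bet_char h₂ hdeg₂ hleaf₂ (f u) (f v) (f w)]
    constructor
    · intro h x y hh1 hh2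
      exact (MP u x y).mp (h x y ((MP v x y).mpr hh1) ((MP w x y).mpr hh2))
    · intro h x y hh1 hh2
      exact (MP u x y).mpr (h x y ((MP v x y).mp hh1) ((MP w x y).mp hh2))
  -- adjacency is preserved
  have AP : ∀ v w : V₁, G₁.Adj v w ↔ G₂.Adj (f v) (f w) := by
    intro v w
    rw [adj_char h₁ v w, adj_char h₂ (f v) (f w)]
    constructor
    · rintro ⟨hne, hall⟩
      refine ⟨fun hh => hne (finj hh), ?_⟩
      intro u' hu'
      have hgu : u' = f (g u') := (fg u').symm
      rw [hgu] at hu'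
      rcases hall (g u') ((BP (g u') v w).mpr hu') with hh | hh
      · exact Or.inl (by rw [hgu, hh])
      · exact Or.inr (by rw [hgu, hh])
    · rintro ⟨hne, hall⟩
      refine ⟨fun hh => hne (by rw [hh]), ?_⟩
      intro u hu
      rcases hall (f u) ((BP u v w).mp hu) with hh | hh
      · exact Or.inl (finj hh)
      · exact Or.inr (finj hh)
  refine ⟨⟨⟨f, g, gf, fg⟩, ?_⟩, ?_⟩
  · intro a b
    exact (AP a b).symm
  · intro x
    exact f_leaf x
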